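/- Let q be a prime power and L a field extension of Fq of degree m. Let 1 ≤ k < n, let H ∈ L^{k×n} have rank k, and let C = {x ∈ L^n : Hx = 0} (an [n, n−k] linear code over L with parity-check matrix H). If the minimum rank distance of C equals k + 1, then for every integer 0 ≤ μ ≤ n − k and every matrix B ∈ Fq^{μ×n} (viewed in L^{μ×n} via the embedding Fq ⊆ L), the rank over L of the stacked (k+μ)×n matrix [H; B] equals rank H + rank B, where rank B is the rank of B over Fq (which equals its rank over L). -/

import Mathlib

set_option autoImplicit false
set_option maxHeartbeats 1000000

open Matrix

/-- The rank weight of `x ∈ L^n`: the dimension over `F` of the `F`-span of its coordinates. -/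
noncomputable def rankWeight (F : Type*) {L : Type*} [Field F] [Field L] [Algebra F L]
    {n : ℕ} (x : Fin n → L) : ℕ :=
  Module.finrank F (Submodule.span F (Set.range x))

/-- The minimum rank distance of a code `C ⊆ L^n` equals `d`. -/
def minRankDistEq (F : Type*) {L : Type*} [Field F] [Field L] [Algebra F L]
    {n : ℕ} (C : Set (Fin n → L)) (d : ℕ) : Prop :=
  IsLeast {e | ∃ x ∈ C, ∃ y ∈ C, x ≠ y ∧ rankWeight F (x - y) = e} d

/-- F-linearly independent families in `F^n` stay independent over an extension `L`. -/
lemma li_baseChange {F L : Type*} [Field F] [Field L] [Algebra F L]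
    {n : ℕ} {ι : Type*} {u : ι → (Fin n → F)} (h : LinearIndependent F u) :
    LinearIndependent L (fun i => (algebraMap F L) ∘ u i) := by
  classical
  rw [linearIndependent_iff']
  intro s g hg i hi
  set b := Module.Basis.ofVectorSpace F L with hb
  have key : ∀ β, ∀ i ∈ s, b.repr (g i) β = 0 := by
    intro β
    refine linearIndependent_iff'.mp h s (fun i => b.repr (g i) β) ?_
    have h1 : ∀ j, ∑ i ∈ s, (u i j) • g i = 0 := by
      intro j
      have := congrFun hg j
      simp only [Finset.sum_apply, Pi.smul_apply, Function.comp_apply, smul_eq_mul,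
        Pi.zero_apply] at this
      calc ∑ i ∈ s, (u i j) • g i = ∑ i ∈ s, g i * algebraMap F L (u i j) := by
            refine Finset.sum_congr rfl fun i _ => ?_
            rw [Algebra.smul_def, mul_comm]
        _ = 0 := this
    funext j
    have h2 := congrArg (fun z => b.repr z β) (h1 j)
    simp only [map_sum, _root_.map_smul, Finsupp.coe_finset_sum, Finset.sum_apply,
      Finsupp.coe_smul, Pi.smul_apply, smul_eq_mul, map_zero, Finsupp.coe_zero,
      Pi.zero_apply] at h2
    simpa [Finset.sum_apply, smul_eq_mul, mul_comm] using h2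
  have : b.repr (g i) = 0 := by
    ext β; exact key β i hi
  simpa using (LinearEquiv.map_eq_zero_iff b.repr).mp this


/-- If `x` lies in the `L`-span of `t` vectors with entries in `F`, `wt_R x ≤ t`. -/
lemma rankWeight_le_of_mem_span {F L : Type*} [Field F] [Field L] [Algebra F L]
    {n t : ℕ} (w : Fin t → (Fin n → F)) (x : Fin n → L)
    (hx : x ∈ Submodule.span L (Set.range fun i => (algebraMap F L) ∘ w i)) :
    rankWeight F x ≤ t := by
  classical
  obtain ⟨c, rfl⟩ := (Submodule.mem_span_range_iff_exists_fun L).mp hx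
  have hsub : Submodule.span F (Set.range (∑ i, c i • ((algebraMap F L) ∘ w i)))
      ≤ Submodule.span F (Set.range c) := by
    rw [Submodule.span_le]
    rintro _ ⟨j, rfl⟩
    have : (∑ i, c i • ((algebraMap F L) ∘ w i)) j = ∑ i, (w i j) • c i := by
      simp only [Finset.sum_apply, Pi.smul_apply, Function.comp_apply, smul_eq_mul]
      exact Finset.sum_congr rfl fun i _ => by rw [Algebra.smul_def, mul_comm]
    rw [this]
    exact Submodule.sum_mem _ fun i _ =>
      Submodule.smul_mem _ _ (Submodule.subset_span (Set.mem_range_self i))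
  haveI := FiniteDimensional.span_of_finite F (Set.finite_range c)
  refine le_trans (Submodule.finrank_mono hsub) ?_
  refine le_trans (finrank_span_le_card (Set.range c)) ?_
  rw [Set.toFinset_range]
  exact le_trans (Finset.card_image_le) (by simp)


/-- rank-nullity for matrices over a field. -/
lemma rank_add_finrank_ker {K : Type*} [Field K] {a : Type*} {n : ℕ} (M : Matrix a (Fin n) K) :
    M.rank + Module.finrank K (LinearMap.ker M.mulVecLin) = n := by
  have := LinearMap.finrank_range_add_finrank_ker M.mulVecLin
  rw [Module.finrank_pi, Fintype.card_fin] at this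
  exact this


/-- If the `[n, n-k]` code `C = {x : Hx = 0}` over `L` has minimum rank distance `k + 1`
(i.e., is MRD), then for every `μ ≤ n - k` and every `B ∈ F^{μ×n}`, the stacked matrix
`[H; B]` satisfies `rank [H; B] = rank H + rank B`. -/
theorem rank_fromRows_eq_add_of_MRD
    (q m : ℕ) (hq : IsPrimePow q)
    (F L : Type) [Field F] [Fintype F] (hF : Fintype.card F = q)
    [Field L] [Algebra F L] (hm : Module.finrank F L = m)
    (n k : ℕ) (hk : 1 ≤ k) (hkn : k < n)
    (H : Matrix (Fin k) (Fin n) L) (hH : H.rank = k)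
    (hMRD : minRankDistEq F {x : Fin n → L | H *ᵥ x = 0} (k + 1))
    (μ : ℕ) (hμ : μ ≤ n - k) (B : Matrix (Fin μ) (Fin n) F) :
    (Matrix.fromRows H (B.map (algebraMap F L))).rank = H.rank + B.rank := by
  classical
  set ι := algebraMap F L with hι
  set B' := B.map ι with hB'
  -- submodules over L
  set C' : Submodule L (Fin n → L) := LinearMap.ker H.mulVecLin with hC'
  set K : Submodule L (Fin n → L) := LinearMap.ker B'.mulVecLin with hK
  -- basic rank facts
  have hBrank_le : B.rank ≤ μ := le_trans (Matrix.rank_le_card_height B) (by simp)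
  have hBμ : B.rank ≤ n - k := le_trans hBrank_le hμ
  -- kernel of B over F
  set kF : Submodule F (Fin n → F) := LinearMap.ker B.mulVecLin with hkF
  have hkFrank : B.rank + Module.finrank F kF = n := rank_add_finrank_ker B
  have hkdim : k ≤ Module.finrank F kF := by omega
  -- a basis of kF, coerced to F^n
  set bas := Module.finBasis F kF with hbas
  have hbascard : Module.finrank F kF = Module.finrank F kF := rfl
  have libas : LinearIndependent F (fun i => ((bas i : kF) : Fin n → F)) :=
    bas.linearIndependent.map' kF.subtype kF.ker_subtype
  -- membership of any element of the code that lies in span of ≤ k rational vectors is 0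
  have hzero : ∀ x : Fin n → L, H *ᵥ x = 0 →
      (∃ w : Fin k → (Fin n → F),
        x ∈ Submodule.span L (Set.range fun i => ι ∘ w i)) → x = 0 := by
    rintro x hx ⟨w, hw⟩
    by_contra hxne
    have hwt : rankWeight F x ≤ k := rankWeight_le_of_mem_span w x hw
    have hmem : rankWeight F x ∈
        {e | ∃ a ∈ {x : Fin n → L | H *ᵥ x = 0}, ∃ b ∈ {x : Fin n → L | H *ᵥ x = 0},
          a ≠ b ∧ rankWeight F (a - b) = e} := by
      refine ⟨x, hx, 0, ?_, hxne, by rw [sub_zero]⟩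
      simp [Set.mem_setOf_eq, Matrix.mulVec_zero]
    have := hMRD.2 hmem
    omega
  -- the u_i : k independent F-vectors in kF
  set u : Fin k → (Fin n → F) := fun i => ((bas (Fin.castLE hkdim i) : kF) : Fin n → F) with hu
  have hui_mem : ∀ i, u i ∈ kF := fun i => (bas (Fin.castLE hkdim i)).2
  have liu : LinearIndependent F u := libas.comp _ (Fin.castLE_injective hkdim)
  -- the mapped family and its span W'
  set v : Fin k → (Fin n → L) := fun i => ι ∘ u i with hv
  have liv : LinearIndependent L v := li_baseChange liu
  set W' : Submodule L (Fin n → L) := Submodule.span L (Set.range v) with hW'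
  have hW'rank : Module.finrank L W' = k := by
    rw [hW', finrank_span_eq_card liv, Fintype.card_fin]
  -- mapped kernel vectors lie in K
  have hmapker : ∀ y : Fin n → F, y ∈ kF → (ι ∘ y) ∈ K := by
    intro y hy
    have hy0 : B *ᵥ y = 0 := hy
    simp only [hK, LinearMap.mem_ker, Matrix.mulVecLin_apply]
    funext j
    have := (RingHom.map_mulVec ι B y j).symm
    rw [hy0] at this
    simpa using this
  have hW'K : W' ≤ K := by
    rw [hW', Submodule.span_le]
    rintro _ ⟨i, rfl⟩
    exact hmapker (u i) (hui_mem i)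
  -- C' ⊓ W' = ⊥
  have hCW : C' ⊓ W' = ⊥ := by
    rw [eq_bot_iff]
    rintro x ⟨hx1, hx2⟩
    have hx0 : x = 0 := hzero x hx1 ⟨u, hx2⟩
    simp [hx0]
  -- finrank of K
  set r := B'.rank with hr
  have hKrank : r + Module.finrank L K = n := rank_add_finrank_ker B'
  -- r ≤ B.rank : mapped basis of kF is independent and in K
  have hrle : r ≤ B.rank := by
    have livfull : LinearIndependent L (fun i => ι ∘ ((bas i : kF) : Fin n → F)) :=
      li_baseChange libas
    have hmem : ∀ i, (ι ∘ ((bas i : kF) : Fin n → F)) ∈ K := fun i =>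
      hmapker _ (bas i).2
    have lisub : LinearIndependent L (fun i => (⟨_, hmem i⟩ : K)) :=
      LinearIndependent.of_comp K.subtype (by exact livfull)
    have := lisub.fintype_card_le_finrank
    rw [Fintype.card_fin] at this
    omega
  -- B.rank ≤ r : mapped basis of the range of B is independent and in range B'
  have hrge : B.rank ≤ r := by
    set rb := Module.finBasis F (LinearMap.range B.mulVecLin) with hrb
    have hrbmem : ∀ i, (ι ∘ ((rb i : LinearMap.range B.mulVecLin) : Fin μ → F)) ∈
        LinearMap.range B'.mulVecLin := by
      intro i
      obtain ⟨x, hx⟩ := (rb i).2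
      refine ⟨ι ∘ x, ?_⟩
      simp only [Matrix.mulVecLin_apply] at hx ⊢
      funext j
      have := (RingHom.map_mulVec ι B x j).symm
      rw [hx] at this
      simpa using this
    have lirb : LinearIndependent F (fun i => ((rb i : _) : Fin μ → F)) :=
      rb.linearIndependent.map' _ (LinearMap.range B.mulVecLin).ker_subtype
    have livrb : LinearIndependent L (fun i => ι ∘ ((rb i : _) : Fin μ → F)) :=
      li_baseChange lirb
    have lisub : LinearIndependent L (fun i => (⟨_, hrbmem i⟩ : LinearMap.range B'.mulVecLin)) :=
      LinearIndependent.of_comp (LinearMap.range B'.mulVecLin).subtype (by exact livrb)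
    have := lisub.fintype_card_le_finrank
    rwa [Fintype.card_fin] at this
  have hrB : r = B.rank := le_antisymm hrle hrge
  -- finrank C'
  have hCrank : Module.finrank L C' = n - k := by
    have := rank_add_finrank_ker H
    rw [hH, ← hC'] at this
    omega
  -- upper bound on finrank (C' ⊓ K)
  have hints : (C' ⊓ K) ⊓ W' = ⊥ := by
    rw [eq_bot_iff, ← hCW]
    exact inf_le_inf_right W' inf_le_left
  have hup : Module.finrank L ((C' ⊓ K) : Submodule L (Fin n → L)) + k ≤ n - r := by
    have hsum := Submodule.finrank_sup_add_finrank_inf_eq (C' ⊓ K) W'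
    rw [hints] at hsum
    simp only [finrank_bot, add_zero] at hsum
    have hsup_le : (C' ⊓ K) ⊔ W' ≤ K := sup_le inf_le_right hW'K
    have := Submodule.finrank_mono hsup_le
    omega
  -- lower bound
  have hlow : (n - k) + (n - r) ≤ n + Module.finrank L ((C' ⊓ K) : Submodule L (Fin n → L)) := by
    have hsum := Submodule.finrank_sup_add_finrank_inf_eq C' K
    have hle : Module.finrank L ((C' ⊔ K : Submodule L (Fin n → L))) ≤ n := by
      have := Submodule.finrank_le (C' ⊔ K : Submodule L (Fin n → L))
      rwa [Module.finrank_pi, Fintype.card_fin] at this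
    omega
  have hrn : r ≤ n - k := by omega
  have hinter : Module.finrank L ((C' ⊓ K) : Submodule L (Fin n → L)) = n - k - r := by
    omega
  -- kernel of the stacked matrix
  have hkerstack : LinearMap.ker (Matrix.fromRows H B').mulVecLin = C' ⊓ K := by
    ext x
    simp only [LinearMap.mem_ker, Matrix.mulVecLin_apply, Submodule.mem_inf, hC', hK]
    rw [Matrix.fromRows_mulVec]
    constructor
    · intro h
      constructor
      · funext i; exact congrFun h (Sum.inl i)
      · funext i; exact congrFun h (Sum.inr i)
    · rintro ⟨h1, h2⟩
      funext i
      cases i with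
      | inl i => exact congrFun h1 i
      | inr i => exact congrFun h2 i
  have hfinal := rank_add_finrank_ker (Matrix.fromRows H B')
  rw [hkerstack, hinter] at hfinal
  rw [hH, ← hrB]
  omega
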